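/- arXiv:1403.5240 — 9 statements merged into one kernel-verified Lean document; each statement's English description precedes it below -/
import Mathlib

section
/- Let λ > 0 and n ≥ 2 be an integer. If (u,v) ∈ ℝ² satisfies u ≥ 0, v ≥ 0, n·u + (2n-1)·v ≤ 1 and λ·u² + v = max(λ/n², 1/(2n-1)), then (u,v) = (0, 1/(2n-1)) or (u,v) = (1/n, 0). -/
theorem zalcman_stmt_1 (lam : ℝ) (hlam : 0 < lam) (n : ℕ) (hn : 2 ≤ n)
    (u v : ℝ) (hu : 0 ≤ u) (hv : 0 ≤ v) (huv : (n : ℝ) * u + (2 * n - 1) * v ≤ 1)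
    (heq : lam * u ^ 2 + v = max (lam / (n : ℝ) ^ 2) (1 / (2 * (n : ℝ) - 1))) :
    (u = 0 ∧ v = 1 / (2 * (n : ℝ) - 1)) ∨ (u = 1 / (n : ℝ) ∧ v = 0) := by
  have hN : (2 : ℝ) ≤ (n : ℝ) := by exact_mod_cast hn
  set N : ℝ := (n : ℝ) with hNdef
  set M : ℝ := max (lam / N ^ 2) (1 / (2 * N - 1)) with hMdef
  have hM1 : lam / N ^ 2 ≤ M := le_max_left _ _
  have hM2 : 1 / (2 * N - 1) ≤ M := le_max_right _ _
  have hNpos : (0 : ℝ) < N := by linarith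
  have h2N : (0 : ℝ) < 2 * N - 1 := by linarith
  have h1 : lam ≤ M * N ^ 2 := by
    rw [div_le_iff₀ (by positivity)] at hM1; linarith
  have h2 : 1 ≤ M * (2 * N - 1) := by
    rw [div_le_iff₀ h2N] at hM2; linarith
  rcases hu.eq_or_lt with h0 | hupos
  · -- u = 0
    left
    have hveq : v = M := by rw [← heq, ← h0]; ring
    have hvle : v * (2 * N - 1) ≤ 1 := by nlinarith
    have hv1 : v ≤ 1 / (2 * N - 1) := by
      rw [le_div_iff₀ h2N]; linarith
    have : 1 / (2 * N - 1) ≤ v := le_trans hM2 (le_of_eq hveq.symm)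
    exact ⟨h0.symm, le_antisymm hv1 this⟩
  · -- u > 0
    have hle : N * u ≤ 1 := by nlinarith [mul_nonneg h2N.le hv]
    rcases lt_or_eq_of_le hle with hlt | heq1
    · -- 0 < N*u < 1 : contradiction
      exfalso
      have hA : lam * u ^ 2 < M * (N * u) := by
        nlinarith [mul_pos (mul_pos hlam hupos) (sub_pos.mpr hlt),
          mul_le_mul_of_nonneg_right h1 hu, sq_nonneg u, mul_pos hNpos hupos]
      have hB : v ≤ M * (1 - N * u) := by
        nlinarith [mul_le_mul_of_nonneg_left h2 (sub_pos.mpr hlt).le]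
      have hC : M * (N * u) + M * (1 - N * u) = M := by ring
      linarith [heq.ge, heq.le]
    · -- N*u = 1
      right
      have hu1 : u = 1 / N := by field_simp; linarith
      have hv0 : v = 0 := by nlinarith [mul_nonneg h2N.le hv]
      exact ⟨hu1, hv0⟩
end

section
/- Let λ > 0, n ≥ 2, and let a, b be complex numbers with n·|a| + (2n-1)·|b| ≤ 1. Then |λ·a² − b| ≤ max(λ/n², 1/(2n-1)). -/
theorem zalcman_stmt_2 (lam : ℝ) (hlam : 0 < lam) (n : ℕ) (hn : 2 ≤ n)
    (a b : ℂ) (hab : (n : ℝ) * ‖a‖ + (2 * n - 1) * ‖b‖ ≤ 1) :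
    ‖(lam : ℂ) * a ^ 2 - b‖ ≤ max (lam / (n : ℝ) ^ 2) (1 / (2 * (n : ℝ) - 1)) := by
  set x := ‖a‖ with hx
  set y := ‖b‖ with hy
  have hx0 : 0 ≤ x := norm_nonneg a
  have hy0 : 0 ≤ y := norm_nonneg b
  have hN : (2 : ℝ) ≤ (n : ℝ) := by exact_mod_cast hn
  have htri : ‖(lam : ℂ) * a ^ 2 - b‖ ≤ lam * x ^ 2 + y := by
    calc ‖(lam : ℂ) * a ^ 2 - b‖ ≤ ‖(lam : ℂ) * a ^ 2‖ + ‖b‖ := norm_sub_le _ _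
    _ = lam * x ^ 2 + y := by
        rw [norm_mul, norm_pow, Complex.norm_real, Real.norm_eq_abs,
          abs_of_pos hlam]
  refine htri.trans ?_
  have hn2 : (0 : ℝ) < (n : ℝ) ^ 2 := by positivity
  have h2n : (0 : ℝ) < 2 * (n : ℝ) - 1 := by linarith
  have hxle : (n : ℝ) * x ≤ 1 := by nlinarith
  rcases le_total ((n : ℝ) ^ 2) (lam * (2 * (n : ℝ) - 1)) with h | h
  · refine le_max_of_le_left ?_
    rw [le_div_iff₀ hn2]
    -- let t = (2n-1)y ; nx ≤ 1 - t, t ≤ 1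
    have ht1 : (2 * (n : ℝ) - 1) * y ≤ 1 := by nlinarith
    have hs : (n : ℝ) * x ≤ 1 - (2 * (n : ℝ) - 1) * y := by linarith
    have hsq : ((n : ℝ) * x) ^ 2 ≤ (1 - (2 * (n : ℝ) - 1) * y) ^ 2 := by
      apply sq_le_sq' <;> nlinarith
    have h1 : lam * ((n : ℝ) * x) ^ 2 ≤ lam * (1 - (2 * (n : ℝ) - 1) * y) ^ 2 :=
      mul_le_mul_of_nonneg_left hsq hlam.le
    have h2 : (n : ℝ) ^ 2 * y ≤ lam * ((2 * (n : ℝ) - 1) * y) := by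
      nlinarith
    nlinarith [mul_nonneg (mul_nonneg hlam.le hy0) (sub_nonneg.mpr ht1)]
  · refine le_max_of_le_right ?_
    rw [le_div_iff₀ h2n]
    have h1 : lam * x ^ 2 * (2 * (n : ℝ) - 1) ≤ (n : ℝ) ^ 2 * x ^ 2 := by
      nlinarith [sq_nonneg x]
    have h2 : (n : ℝ) ^ 2 * x ^ 2 ≤ (n : ℝ) * x := by
      nlinarith [mul_nonneg (mul_nonneg (Nat.cast_nonneg n : (0:ℝ) ≤ (n:ℝ)) hx0) (sub_nonneg.mpr hxle)]
    nlinarith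
end

section
/- Let n ≥ 2, 0 < λ < n²/(2n-1), and let f(z) = z + Σ_{k≥2} a_k z^k satisfy Σ_{k≥2} k|a_k| ≤ 1. If |λ·a_n² − a_{2n-1}| = 1/(2n-1), then f(z) = z + (α/(2n-1))·z^{2n-1} for some complex α with |α| = 1. -/
theorem zalcman_stmt_4 (n : ℕ) (hn : 2 ≤ n) (lam : ℝ)
    (hlam : 0 < lam) (hlam' : lam < (n : ℝ) ^ 2 / (2 * n - 1)) (a : ℕ → ℂ)
    (hsum : Summable (fun k : ℕ => ((k + 2 : ℕ) : ℝ) * ‖a (k + 2)‖))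
    (hH : ∑' k : ℕ, ((k + 2 : ℕ) : ℝ) * ‖a (k + 2)‖ ≤ 1)
    (heq : ‖(lam : ℂ) * (a n) ^ 2 - a (2 * n - 1)‖ = 1 / (2 * (n : ℝ) - 1)) :
    ∃ α : ℂ, ‖α‖ = 1 ∧ a (2 * n - 1) = α / (2 * n - 1) ∧
      ∀ k : ℕ, 2 ≤ k → k ≠ 2 * n - 1 → a k = 0 := by
  set g : ℕ → ℝ := fun k => ((k + 2 : ℕ) : ℝ) * ‖a (k + 2)‖ with hg
  have hgnn : ∀ k, 0 ≤ g k := fun k => by positivity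
  have hn3 : (2*n-3) + 2 = 2*n-1 := by omega
  have hn2 : (n-2) + 2 = n := by omega
  set nr : ℝ := (n : ℝ) with hnr
  have hnr2 : (2:ℝ) ≤ nr := by rw [hnr]; exact_mod_cast hn
  have hNpos : (0:ℝ) < 2*nr - 1 := by linarith
  set x : ℝ := ‖a n‖ with hx
  set y : ℝ := ‖a (2*n-1)‖ with hy
  have hxnn : 0 ≤ x := norm_nonneg _
  have hynn : 0 ≤ y := norm_nonneg _
  -- pair sums
  have hpair : ∀ m : ℕ, m ≠ 2*n-3 → g m + g (2*n-3) ≤ 1 := by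
    intro m hm
    have := (Summable.sum_le_tsum ({m, 2*n-3} : Finset ℕ)
      (fun i _ => hgnn i) hsum).trans hH
    rwa [Finset.sum_pair hm] at this
  -- values of g
  have hg2 : g (2*n-3) = (2*nr - 1) * y := by
    simp only [hg, hn3, hy]
    congr 1
    push_cast [Nat.cast_sub (show 1 ≤ 2*n by omega)]
    ring
  have hg1 : g (n-2) = nr * x := by
    simp only [hg, hn2, hx]
    rfl
  have hne : (n-2 : ℕ) ≠ 2*n-3 := by omega
  have hB : nr * x + (2*nr - 1) * y ≤ 1 := by
    have := hpair (n-2) hne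
    rwa [hg1, hg2] at this
  -- (A)
  have hA : 1 / (2*nr - 1) ≤ lam * x^2 + y := by
    calc 1 / (2*nr - 1) = ‖(lam : ℂ) * (a n) ^ 2 - a (2 * n - 1)‖ := heq.symm
      _ ≤ ‖(lam : ℂ) * (a n) ^ 2‖ + ‖a (2*n-1)‖ := norm_sub_le _ _
      _ = lam * x^2 + y := by
          rw [norm_mul, norm_pow, Complex.norm_real, Real.norm_eq_abs,
            abs_of_pos hlam]
  have hC : lam * (2*nr - 1) < nr^2 := by
    rw [lt_div_iff₀ hNpos] at hlam'
    linarith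
  -- x = 0
  have hx0 : x = 0 := by
    by_contra h
    have hxpos : 0 < x := lt_of_le_of_ne hxnn (Ne.symm h)
    have h1 : 1 ≤ (2*nr - 1) * (lam * x^2 + y) := by
      have := mul_le_mul_of_nonneg_left hA hNpos.le
      rwa [mul_one_div, div_self (ne_of_gt hNpos)] at this
    have hP : 0 < x^2 := by positivity
    have hyN : 0 ≤ (2*nr - 1) * y := mul_nonneg hNpos.le hynn
    have h8 : nr * x ≤ 1 := by nlinarith
    have h5 : nr * x ≤ (2*nr - 1) * lam * x^2 := by nlinarith
    have h6 : (2*nr - 1) * lam * x^2 < nr^2 * x^2 := by nlinarith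
    have hnx : 0 < nr * x := by positivity
    nlinarith [sq_nonneg (nr*x)]
  have hax : a n = 0 := norm_eq_zero.mp hx0
  -- y = 1/(2n-1)
  have hy1 : (2*nr - 1) * y = 1 := by
    have h1 : 1 / (2*nr - 1) ≤ y := by
      rw [hx0] at hA; simpa using hA
    have h1' : 1 ≤ (2*nr - 1) * y := by
      have := mul_le_mul_of_nonneg_left h1 hNpos.le
      rwa [mul_one_div, div_self (ne_of_gt hNpos)] at this
    have h2 : (2*nr - 1) * y ≤ 1 := by
      have : nr * x = 0 := by rw [hx0]; ring
      linarith
    linarith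
  refine ⟨((2*n-1 : ℕ) : ℂ) * a (2*n-1), ?_, ?_, ?_⟩
  · rw [norm_mul]
    have : ‖((2*n-1 : ℕ) : ℂ)‖ = 2*nr - 1 := by
      rw [Complex.norm_natCast]
      push_cast [Nat.cast_sub (show 1 ≤ 2*n by omega)]
      ring
    rw [this]; exact hy1
  · have hc : ((2*n-1 : ℕ) : ℂ) ≠ 0 := Nat.cast_ne_zero.mpr (by omega)
    have hcast : (2 * (n:ℂ) - 1) = ((2*n-1 : ℕ) : ℂ) := by
      push_cast [Nat.cast_sub (show 1 ≤ 2*n by omega)]; ring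
    rw [hcast]
    exact (mul_div_cancel_left₀ (a (2*n-1)) hc).symm
  · intro k hk hkne
    have hk2 : (k - 2) + 2 = k := by omega
    have hkne' : (k - 2 : ℕ) ≠ 2*n-3 := by omega
    have := hpair (k-2) hkne'
    rw [hg2, hy1] at this
    have hgk : g (k-2) ≤ 0 := by linarith
    have hgval : g (k-2) = ((k:ℝ)) * ‖a k‖ := by
      simp only [hg]
      rw [hk2]
    have hmul : ((k:ℝ)) * ‖a k‖ ≤ 0 := hgval ▸ hgk
    have hkpos : (0:ℝ) < (k:ℝ) := by exact_mod_cast (show 0 < k by omega)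
    have h0 : ((k:ℝ)) * ‖a k‖ = 0 :=
      le_antisymm hmul (mul_nonneg hkpos.le (norm_nonneg _))
    rcases mul_eq_zero.mp h0 with h | h
    · exact absurd h hkpos.ne'
    · exact norm_eq_zero.mp h
end

section
/- Let n ≥ 2, λ > n²/(2n-1), and let f(z) = z + Σ_{k≥2} a_k z^k satisfy Σ_{k≥2} k|a_k| ≤ 1. If |λ·a_n² − a_{2n-1}| = λ/n², then f(z) = z + (α/n)·z^n for some complex α with |α| = 1. -/
theorem zalcman_stmt_5 (n : ℕ) (hn : 2 ≤ n) (lam : ℝ)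
    (hlam : (n : ℝ) ^ 2 / (2 * n - 1) < lam) (a : ℕ → ℂ)
    (hsum : Summable (fun k : ℕ => ((k + 2 : ℕ) : ℝ) * ‖a (k + 2)‖))
    (hH : ∑' k : ℕ, ((k + 2 : ℕ) : ℝ) * ‖a (k + 2)‖ ≤ 1)
    (heq : ‖(lam : ℂ) * (a n) ^ 2 - a (2 * n - 1)‖ = lam / (n : ℝ) ^ 2) :
    ∃ α : ℂ, ‖α‖ = 1 ∧ a n = α / n ∧
      ∀ k : ℕ, 2 ≤ k → k ≠ n → a k = 0 := by
  set N : ℝ := (n : ℝ) with hN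
  have hN2 : (2:ℝ) ≤ N := by rw [hN]; exact_mod_cast hn
  have hden : (0:ℝ) < 2 * N - 1 := by linarith
  have hlam' : N ^ 2 < lam * (2 * N - 1) := by
    rw [div_lt_iff₀ hden] at hlam; exact hlam
  have hlampos : 0 < lam := by nlinarith
  -- pairwise subsums
  have pair : ∀ k : ℕ, 2 ≤ k → k ≠ n →
      N * ‖a n‖ + (k : ℝ) * ‖a k‖ ≤ 1 := by
    intro k hk hkn
    have hsub := Summable.sum_le_tsum ({n - 2, k - 2} : Finset ℕ)
      (fun i _ => by positivity) hsum
    rw [Finset.sum_pair (by omega : n - 2 ≠ k - 2)] at hsub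
    have e1 : n - 2 + 2 = n := by omega
    have e2 : k - 2 + 2 = k := by omega
    rw [e1, e2] at hsub
    exact hsub.trans hH
  set x := ‖a n‖ with hxdef
  set y := ‖a (2 * n - 1)‖ with hydef
  have hx0 : 0 ≤ x := norm_nonneg _
  have hy0 : 0 ≤ y := norm_nonneg _
  have h2n1 : ((2 * n - 1 : ℕ) : ℝ) = 2 * N - 1 := by
    have : (1:ℕ) ≤ 2 * n := by omega
    push_cast [this]; ring
  have hpair : N * x + (2 * N - 1) * y ≤ 1 := by
    have := pair (2 * n - 1) (by omega) (by omega)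
    rwa [h2n1] at this
  -- triangle inequality
  have htri : lam / N ^ 2 ≤ lam * x ^ 2 + y := by
    rw [← heq]
    calc ‖(lam : ℂ) * (a n) ^ 2 - a (2 * n - 1)‖
        ≤ ‖(lam : ℂ) * (a n) ^ 2‖ + ‖a (2 * n - 1)‖ := norm_sub_le _ _
      _ = lam * x ^ 2 + y := by
          rw [norm_mul, norm_pow, Complex.norm_real, Real.norm_of_nonneg hlampos.le]
  have hNpos : (0:ℝ) < N := by linarith
  have hN2pos : (0:ℝ) < N ^ 2 := by positivity
  have htri' : lam * (2 * N - 1) ≤ (lam * x ^ 2 + y) * N ^ 2 * (2 * N - 1) := by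
    have := (div_le_iff₀ hN2pos).mp htri
    nlinarith
  -- force N * x = 1
  have hNx1 : N * x = 1 := by
    have hle : N * x ≤ 1 := by nlinarith
    have hge : 1 ≤ N * x := by nlinarith [mul_nonneg (mul_nonneg hlampos.le hden.le) (mul_nonneg hNpos.le hx0)]
    linarith
  have hxval : x = 1 / N := by field_simp at hNx1 ⊢; linarith
  -- all other coefficients vanish
  have hzero : ∀ k : ℕ, 2 ≤ k → k ≠ n → a k = 0 := by
    intro k hk hkn
    have hp := pair k hk hkn
    have hkpos : (0:ℝ) < (k:ℝ) := by positivity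
    have h1 : (k : ℝ) * ‖a k‖ ≤ 0 := by rw [hNx1] at hp; linarith
    have h2 : ‖a k‖ ≤ 0 := by nlinarith [norm_nonneg (a k)]
    exact norm_eq_zero.mp (le_antisymm h2 (norm_nonneg _))
  refine ⟨(n : ℂ) * a n, ?_, ?_, hzero⟩
  · rw [norm_mul, Complex.norm_natCast]
    exact hNx1
  · have hn0 : (n : ℂ) ≠ 0 := by exact_mod_cast (by omega : n ≠ 0)
    rw [mul_comm, mul_div_assoc, div_self hn0, mul_one]
end

section
/- Let μ be a probability measure on [0, 2π], n ≥ 2, and 0 < λ ≤ 2. Define a_k = ∫₀^{2π} e^{i(k-1)θ} dμ(θ) for k ≥ 2. Then |λ·a_n² − a_{2n-1}| ≤ 1. -/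
open MeasureTheory Real

theorem zalcman_stmt_7 (μ : Measure ℝ) [IsProbabilityMeasure μ]
    (hsupp : μ (Set.Icc (0 : ℝ) (2 * π))ᶜ = 0)
    (n : ℕ) (hn : 2 ≤ n) (lam : ℝ) (hlam : 0 < lam) (hlam' : lam ≤ 2)
    (a : ℕ → ℂ)
    (ha : ∀ k : ℕ, 2 ≤ k → a k = ∫ θ, Complex.exp (Complex.I * ((k : ℂ) - 1) * (θ : ℂ)) ∂μ) :
    ‖(lam : ℂ) * (a n) ^ 2 - a (2 * n - 1)‖ ≤ 1 := by
  set m : ℝ := (n : ℝ) - 1 with hm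
  set g : ℝ → ℂ := fun θ => Complex.exp ((m * θ : ℝ) * Complex.I) with hg
  have hgnorm : ∀ θ, ‖g θ‖ = 1 := fun θ => by
    simp [hg, Complex.norm_exp, Complex.norm_exp_ofReal_mul_I]
  have hgcont : Continuous g := by
    apply Complex.continuous_exp.comp
    continuity
  have hgint : Integrable g μ :=
    (integrable_const (1 : ℝ)).mono' hgcont.aestronglyMeasurable
      (ae_of_all _ fun θ => (hgnorm θ).le)
  have hg2int : Integrable (fun θ => (g θ) ^ 2) μ :=
    (integrable_const (1 : ℝ)).mono' ((hgcont.pow 2).aestronglyMeasurable)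
      (ae_of_all _ fun θ => by simp [norm_pow, hgnorm θ])
  set c : ℂ := ∫ θ, g θ ∂μ with hc
  have han : a n = c := by
    rw [ha n hn, hc]
    refine integral_congr_ae (ae_of_all _ fun θ => ?_)
    simp only [hg]
    congr 1
    push_cast [hm]
    ring
  have h2n : (2 : ℕ) ≤ 2 * n - 1 := by omega
  have ha2n : a (2 * n - 1) = ∫ θ, (g θ) ^ 2 ∂μ := by
    rw [ha _ h2n]
    refine integral_congr_ae (ae_of_all _ fun θ => ?_)
    simp only [hg]
    rw [sq, ← Complex.exp_add]
    congr 1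
    have : ((2 * n - 1 : ℕ) : ℂ) = 2 * (n : ℂ) - 1 := by
      push_cast [Nat.cast_sub (by omega : 1 ≤ 2 * n)]
      ring
    rw [this]
    push_cast [hm]
    ring
  -- variance identity
  have hAint : Integrable (fun θ => (g θ) ^ 2 - 2 * c * g θ) μ :=
    hg2int.sub (hgint.const_mul (2 * c))
  have hVint : Integrable (fun θ => (g θ - c) ^ 2) μ := by
    have heq : (fun θ : ℝ => (g θ - c) ^ 2)
        = fun θ => ((g θ) ^ 2 - 2 * c * g θ) + c ^ 2 := by
      funext θ; ring
    rw [heq]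
    exact hAint.add (integrable_const _)
  have hV : ∫ θ, (g θ - c) ^ 2 ∂μ = (∫ θ, (g θ) ^ 2 ∂μ) - c ^ 2 := by
    have heq : (fun θ : ℝ => (g θ - c) ^ 2)
        = fun θ => ((g θ) ^ 2 - 2 * c * g θ) + c ^ 2 := by
      funext θ; ring
    rw [heq, integral_add hAint (integrable_const _),
      integral_sub hg2int (hgint.const_mul (2 * c)), integral_const_mul, integral_const]
    rw [← hc]
    simp [measure_univ]
    ring
  -- bound on the variance
  have hreint : Integrable (fun θ => (g θ * (starRingEnd ℂ) c).re) μ :=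
    (hgint.mul_const _).re
  have hexp : ∀ z : ℂ, Complex.normSq (z - c)
      = Complex.normSq z - 2 * (z * (starRingEnd ℂ) c).re + Complex.normSq c := by
    intro z
    simp [Complex.normSq_apply, Complex.sub_re, Complex.sub_im, Complex.mul_re,
      Complex.conj_re, Complex.conj_im]
    ring
  have hnormsq : ∫ θ, ‖g θ - c‖ ^ 2 ∂μ = 1 - ‖c‖ ^ 2 := by
    have hpt : ∀ θ, ‖g θ - c‖ ^ 2 = 1 - 2 * (g θ * (starRingEnd ℂ) c).re + ‖c‖ ^ 2 := by
      intro θ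
      have h2 : Complex.normSq (g θ) = 1 := by
        have h := hgnorm θ
        rw [← Complex.sq_norm, h]; norm_num
      simp only [Complex.sq_norm]
      rw [hexp, h2]
    have hre : ∫ θ, (g θ * (starRingEnd ℂ) c).re ∂μ = ‖c‖ ^ 2 := by
      have h1 : ∫ θ, (g θ * (starRingEnd ℂ) c).re ∂μ
          = (∫ θ, g θ * (starRingEnd ℂ) c ∂μ).re := by
        exact integral_re (hgint.mul_const _)
      rw [h1, integral_mul_const, ← hc, Complex.mul_conj]
      simp [← Complex.ofReal_pow, Complex.ofReal_re, Complex.normSq_eq_norm_sq]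
    have hBint : Integrable (fun θ : ℝ => 1 - 2 * (g θ * (starRingEnd ℂ) c).re) μ :=
      (integrable_const _).sub (hreint.const_mul 2)
    calc ∫ θ, ‖g θ - c‖ ^ 2 ∂μ
        = ∫ θ, ((1 - 2 * (g θ * (starRingEnd ℂ) c).re) + ‖c‖ ^ 2) ∂μ := by
          exact integral_congr_ae (ae_of_all _ fun θ => hpt θ)
      _ = 1 - ‖c‖ ^ 2 := by
          rw [integral_add hBint (integrable_const _),
            integral_sub (integrable_const _) (hreint.const_mul 2), integral_const_mul, hre,
            integral_const, integral_const]
          simp [measure_univ]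
          ring
  have hVbound : ‖∫ θ, (g θ - c) ^ 2 ∂μ‖ ≤ 1 - ‖c‖ ^ 2 := by
    calc ‖∫ θ, (g θ - c) ^ 2 ∂μ‖ ≤ ∫ θ, ‖(g θ - c) ^ 2‖ ∂μ :=
          norm_integral_le_integral_norm _
      _ = ∫ θ, ‖g θ - c‖ ^ 2 ∂μ := by simp [norm_pow]
      _ = 1 - ‖c‖ ^ 2 := hnormsq
  -- assemble
  rw [han, ha2n]
  have key : (lam : ℂ) * c ^ 2 - ∫ θ, (g θ) ^ 2 ∂μ
      = ((lam : ℂ) - 1) * c ^ 2 - ∫ θ, (g θ - c) ^ 2 ∂μ := by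
    rw [hV]; ring
  rw [key]
  have h1 : ‖((lam : ℂ) - 1) * c ^ 2 - ∫ θ, (g θ - c) ^ 2 ∂μ‖
      ≤ ‖((lam : ℂ) - 1)‖ * ‖c‖ ^ 2 + (1 - ‖c‖ ^ 2) := by
    calc ‖((lam : ℂ) - 1) * c ^ 2 - ∫ θ, (g θ - c) ^ 2 ∂μ‖
        ≤ ‖((lam : ℂ) - 1) * c ^ 2‖ + ‖∫ θ, (g θ - c) ^ 2 ∂μ‖ := norm_sub_le _ _
      _ ≤ ‖((lam : ℂ) - 1)‖ * ‖c‖ ^ 2 + (1 - ‖c‖ ^ 2) := by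
          rw [norm_mul, norm_pow]
          exact add_le_add le_rfl hVbound
  have hlamnorm : ‖((lam : ℂ) - 1)‖ ≤ 1 := by
    have heq : ((lam : ℂ) - 1) = ((lam - 1 : ℝ) : ℂ) := by push_cast; ring
    rw [heq, Complex.norm_real, Real.norm_eq_abs, abs_le]
    constructor <;> linarith
  nlinarith [norm_nonneg c, sq_nonneg ‖c‖, h1,
    mul_le_of_le_one_left (sq_nonneg ‖c‖) hlamnorm]
end

section
/- Let μ be a probability measure on [0, 2π], n ≥ 2, and 0 < λ ≤ 4/3. Define a_k = (2/k)·∫₀^{2π} e^{i(k-1)θ} dμ(θ) for k ≥ 2. Then |λ·a_n² − a_{2n-1}| ≤ 2/(2n-1). -/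
open MeasureTheory Real

lemma zal_norm_exp (r θ : ℝ) : ‖Complex.exp (Complex.I * (r : ℂ) * (θ : ℂ))‖ = 1 := by
  rw [Complex.norm_exp]
  simp

lemma zal_integrable (μ : Measure ℝ) [IsFiniteMeasure μ] (r : ℝ) :
    Integrable (fun θ : ℝ => Complex.exp (Complex.I * (r : ℂ) * (θ : ℂ))) μ := by
  apply Integrable.mono' (integrable_const (1 : ℝ))
  · apply Continuous.aestronglyMeasurable
    fun_prop
  · filter_upwards with θ
    rw [zal_norm_exp]

lemma zal_var (μ : Measure ℝ) [IsProbabilityMeasure μ] (f : ℝ → ℂ)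
    (hf : Integrable f μ) (hf2 : Integrable (fun θ => (f θ) ^ 2) μ)
    (hnorm : ∀ θ, ‖f θ‖ = 1) :
    ‖(∫ θ, (f θ) ^ 2 ∂μ) - (∫ θ, f θ ∂μ) ^ 2‖ ≤ 1 - ‖∫ θ, f θ ∂μ‖ ^ 2 := by
  set c : ℂ := ∫ θ, f θ ∂μ with hc
  have i0 : Integrable (fun θ => 2 * c * f θ) μ := hf.const_mul (2 * c)
  have i1 : Integrable (fun θ => f θ ^ 2 - 2 * c * f θ) μ := hf2.sub i0
  have hg : Integrable (fun θ => (f θ - c) ^ 2) μ := by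
    have : (fun θ => (f θ - c) ^ 2) = fun θ => (f θ ^ 2 - 2 * c * f θ) + c ^ 2 := by
      funext θ; ring
    rw [this]
    exact i1.add (integrable_const _)
  have hA : (∫ θ, (f θ - c) ^ 2 ∂μ) = (∫ θ, (f θ) ^ 2 ∂μ) - c ^ 2 := by
    have e : (fun θ => (f θ - c) ^ 2) = fun θ => (f θ ^ 2 - 2 * c * f θ) + c ^ 2 := by
      funext θ; ring
    rw [e, integral_add i1 (integrable_const _), integral_sub hf2 i0,
      integral_const_mul, integral_const]
    simp [← hc]
    ring
  have hB : ‖∫ θ, (f θ - c) ^ 2 ∂μ‖ ≤ ∫ θ, ‖f θ - c‖ ^ 2 ∂μ := by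
    calc ‖∫ θ, (f θ - c) ^ 2 ∂μ‖ ≤ ∫ θ, ‖(f θ - c) ^ 2‖ ∂μ := norm_integral_le_integral_norm _
    _ = ∫ θ, ‖f θ - c‖ ^ 2 ∂μ := by simp [norm_pow]
  have hCre : (∫ θ, (f θ * (starRingEnd ℂ) c).re ∂μ) = ‖c‖ ^ 2 := by
    have h1 : (∫ θ, (f θ * (starRingEnd ℂ) c) ∂μ) = c * (starRingEnd ℂ) c := by
      rw [integral_mul_const]
    have h2 := (Complex.reCLM : ℂ →L[ℝ] ℝ).integral_comp_comm (hf.mul_const ((starRingEnd ℂ) c))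
    simp only [Complex.reCLM_apply] at h2
    rw [h2, h1, Complex.mul_conj]
    rw [Complex.ofReal_re, ← Complex.sq_norm]
  have hC : (∫ θ, ‖f θ - c‖ ^ 2 ∂μ) = 1 - ‖c‖ ^ 2 := by
    have hexp : ∀ θ, ‖f θ - c‖ ^ 2 = (1 + ‖c‖ ^ 2) - 2 * (f θ * (starRingEnd ℂ) c).re := by
      intro θ
      have h1 : ‖f θ - c‖ ^ 2 = Complex.normSq (f θ - c) := by
        rw [Complex.sq_norm]
      have h2 : Complex.normSq (f θ) = ‖f θ‖ ^ 2 := by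
        rw [Complex.sq_norm]
      have h3 : Complex.normSq c = ‖c‖ ^ 2 := by
        rw [Complex.sq_norm]
      rw [h1, Complex.normSq_sub, h2, h3, hnorm θ]
      ring
    have hire : Integrable (fun θ => (f θ * (starRingEnd ℂ) c).re) μ :=
      (Complex.reCLM : ℂ →L[ℝ] ℝ).integrable_comp (hf.mul_const _)
    calc (∫ θ, ‖f θ - c‖ ^ 2 ∂μ)
        = ∫ θ, ((1 + ‖c‖ ^ 2) - 2 * (f θ * (starRingEnd ℂ) c).re) ∂μ := by
          congr 1; funext θ; rw [hexp θ]
      _ = (1 + ‖c‖ ^ 2) - 2 * ‖c‖ ^ 2 := by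
          rw [integral_sub (integrable_const _) (hire.const_mul _), integral_const,
            integral_const_mul, hCre]
          simp
      _ = 1 - ‖c‖ ^ 2 := by ring
  calc ‖(∫ θ, (f θ) ^ 2 ∂μ) - c ^ 2‖ = ‖∫ θ, (f θ - c) ^ 2 ∂μ‖ := by rw [hA]
    _ ≤ ∫ θ, ‖f θ - c‖ ^ 2 ∂μ := hB
    _ = 1 - ‖c‖ ^ 2 := hC

theorem zalcman_stmt_10 (μ : Measure ℝ) [IsProbabilityMeasure μ]
    (hsupp : μ (Set.Icc (0 : ℝ) (2 * π))ᶜ = 0)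
    (n : ℕ) (hn : 2 ≤ n) (lam : ℝ) (hlam : 0 < lam) (hlam' : lam ≤ 4 / 3)
    (a : ℕ → ℂ)
    (ha : ∀ k : ℕ, 2 ≤ k →
      a k = (2 / (k : ℂ)) * ∫ θ, Complex.exp (Complex.I * ((k : ℂ) - 1) * (θ : ℂ)) ∂μ) :
    ‖(lam : ℂ) * (a n) ^ 2 - a (2 * n - 1)‖ ≤ 2 / (2 * (n : ℝ) - 1) := by
  have hn1 : (1:ℝ) ≤ n := by exact_mod_cast le_trans one_le_two hn
  have hnR : (2:ℝ) ≤ n := by exact_mod_cast hn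
  set r : ℝ := (n : ℝ) - 1 with hr
  set f : ℝ → ℂ := fun θ => Complex.exp (Complex.I * (r : ℂ) * (θ : ℂ)) with hfdef
  have hsq : ∀ θ : ℝ, f θ ^ 2 = Complex.exp (Complex.I * ((2 * r : ℝ) : ℂ) * (θ : ℂ)) := by
    intro θ
    rw [hfdef]
    simp only
    rw [sq, ← Complex.exp_add]
    congr 1
    push_cast
    ring
  have hf : Integrable f μ := zal_integrable μ r
  have hf2 : Integrable (fun θ => (f θ) ^ 2) μ := by
    simp only [hsq]
    exact zal_integrable μ (2 * r)
  have hnorm : ∀ θ, ‖f θ‖ = 1 := fun θ => zal_norm_exp r θ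
  set c : ℂ := ∫ θ, f θ ∂μ with hcdef
  set d : ℂ := ∫ θ, (f θ) ^ 2 ∂μ with hddef
  have hkey : ‖d - c ^ 2‖ ≤ 1 - ‖c‖ ^ 2 := zal_var μ f hf hf2 hnorm
  have hcle : ‖c‖ ≤ 1 := by
    calc ‖c‖ ≤ ∫ θ, ‖f θ‖ ∂μ := norm_integral_le_integral_norm _
      _ = 1 := by simp [hnorm]
  have han : a n = (2 / (n : ℂ)) * c := by
    rw [ha n hn, hcdef, hfdef]
    congr 1
    refine integral_congr_ae (Filter.Eventually.of_forall fun θ => ?_)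
    simp only
    congr 1
    rw [hr]
    push_cast
    ring
  have h2n : (2:ℕ) ≤ 2 * n - 1 := by omega
  have hcast : ((2 * n - 1 : ℕ) : ℂ) = 2 * (n : ℂ) - 1 := by
    push_cast [Nat.cast_sub (by omega : 1 ≤ 2 * n)]
    ring
  have ha2n : a (2 * n - 1) = (2 / (2 * (n : ℂ) - 1)) * d := by
    rw [ha (2 * n - 1) h2n, hcast, hddef]
    congr 1
    refine integral_congr_ae (Filter.Eventually.of_forall fun θ => ?_)
    simp only [hsq θ]
    rw [hr]
    congr 1
    push_cast
    ring
  set t : ℝ := lam * (2 * (2 * (n:ℝ) - 1)) / (n:ℝ) ^ 2 with ht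
  have hnpos : (0:ℝ) < n := by linarith
  have h2n1pos : (0:ℝ) < 2 * (n:ℝ) - 1 := by linarith
  have htpos : 0 < t := by
    rw [ht]; positivity
  have htle : t ≤ 2 := by
    rw [ht, div_le_iff₀ (by positivity)]
    nlinarith [sq_nonneg ((n:ℝ) - 2)]
  have hbound : ‖(t : ℂ) * c ^ 2 - d‖ ≤ 1 := by
    have h1 : (t : ℂ) * c ^ 2 - d = ((t : ℂ) - 1) * c ^ 2 - (d - c ^ 2) := by ring
    rw [h1]
    have h2 : ‖((t : ℂ) - 1) * c ^ 2 - (d - c ^ 2)‖ ≤ |t - 1| * ‖c‖ ^ 2 + (1 - ‖c‖ ^ 2) := by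
      calc ‖((t : ℂ) - 1) * c ^ 2 - (d - c ^ 2)‖
          ≤ ‖((t : ℂ) - 1) * c ^ 2‖ + ‖d - c ^ 2‖ := norm_sub_le _ _
        _ ≤ |t - 1| * ‖c‖ ^ 2 + (1 - ‖c‖ ^ 2) := by
            apply add_le_add _ hkey
            rw [norm_mul, norm_pow]
            apply le_of_eq
            congr 1
            rw [show ((t:ℂ) - 1) = ((t - 1 : ℝ) : ℂ) by push_cast; ring,
              Complex.norm_real, Real.norm_eq_abs]
    have h3 : |t - 1| ≤ 1 := abs_le.2 ⟨by linarith, by linarith⟩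
    nlinarith [sq_nonneg ‖c‖, abs_nonneg (t - 1)]
  have heq : (lam : ℂ) * (a n) ^ 2 - a (2 * n - 1)
      = (2 / (2 * (n : ℂ) - 1)) * ((t : ℂ) * c ^ 2 - d) := by
    rw [han, ha2n, ht]
    have hnne : (n : ℂ) ≠ 0 := by
      exact_mod_cast (Nat.cast_ne_zero (R := ℂ)).2 (by omega)
    have h2nne : (2 * (n : ℂ) - 1) ≠ 0 := by
      intro h
      have : (2 * (n:ℝ) - 1 : ℝ) = 0 := by
        have := congrArg Complex.re h
        push_cast at this
        simpa using this
      linarith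
    push_cast
    field_simp
  rw [heq, norm_mul]
  have hnormc : ‖(2 / (2 * (n : ℂ) - 1))‖ = 2 / (2 * (n:ℝ) - 1) := by
    rw [show (2 * (n : ℂ) - 1) = ((2 * (n:ℝ) - 1 : ℝ) : ℂ) by push_cast; ring]
    rw [show (2 : ℂ) = ((2:ℝ) : ℂ) by norm_num, ← Complex.ofReal_div, Complex.norm_real,
      Real.norm_eq_abs, abs_of_pos (by positivity)]
  rw [hnormc]
  calc (2 / (2 * (n:ℝ) - 1)) * ‖(t : ℂ) * c ^ 2 - d‖
      ≤ (2 / (2 * (n:ℝ) - 1)) * 1 := by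
        apply mul_le_mul_of_nonneg_left hbound (by positivity)
    _ = 2 / (2 * (n:ℝ) - 1) := by ring
end

section
/- Let θ_k = (2k+1)π/(2n−2) for k = 1, …, 2n−2 with n ≥ 2, and let m_k ≥ 0 satisfy Σ_{k=1}^{n-1} m_{2k} = Σ_{k=1}^{n-1} m_{2k−1} = 1/2. Define a_j = Σ_{k=1}^{2n-2} m_k e^{i(j−1)θ_k}. Then for any λ ∈ ℝ, |λ·a_n² − a_{2n-1}| = 1. -/
open Real

lemma sum_range_two_mul_pair {M : Type*} [AddCommMonoid M] (N : ℕ) (f : ℕ → M) :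
    ∑ k ∈ Finset.range (2 * N), f k
      = ∑ j ∈ Finset.range N, (f (2 * j) + f (2 * j + 1)) := by
  induction N with
  | zero => simp
  | succ N ih =>
    rw [Nat.mul_succ, show 2 * N + 2 = (2 * N + 1) + 1 from rfl,
      Finset.sum_range_succ, Finset.sum_range_succ, ih, Finset.sum_range_succ]
    abel

theorem zalcman_stmt_15 (n : ℕ) (hn : 2 ≤ n) (m : ℕ → ℝ)
    (hm : ∀ k, 0 ≤ m k)
    (heven : ∑ k ∈ Finset.range (n - 1), m (2 * (k + 1)) = 1 / 2)
    (hodd : ∑ k ∈ Finset.range (n - 1), m (2 * k + 1) = 1 / 2)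
    (a : ℕ → ℂ)
    (ha : ∀ j : ℕ, a j = ∑ k ∈ Finset.range (2 * n - 2),
      (m (k + 1) : ℂ) * Complex.exp (Complex.I * ((j : ℂ) - 1) *
        (((2 * ((k : ℝ) + 1) + 1) * π / (2 * (n : ℝ) - 2) : ℝ) : ℂ)))
    (lam : ℝ) :
    ‖(lam : ℂ) * (a n) ^ 2 - a (2 * n - 1)‖ = 1 := by
  have hn' : (2 * (n : ℂ) - 2) ≠ 0 := by
    have : (n : ℂ) ≠ 1 := by
      intro h
      have : (n : ℕ) = 1 := by exact_mod_cast h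
      omega
    intro h
    apply this
    linear_combination h / 2
  have h22 : 2 * n - 2 = 2 * (n - 1) := by omega
  -- a (2n-1) = -1
  have hA : a (2 * n - 1) = -1 := by
    rw [ha]
    have hterm : ∀ k ∈ Finset.range (2 * n - 2),
        (m (k + 1) : ℂ) * Complex.exp (Complex.I * (((2 * n - 1 : ℕ) : ℂ) - 1) *
          (((2 * ((k : ℝ) + 1) + 1) * π / (2 * (n : ℝ) - 2) : ℝ) : ℂ))
        = -(m (k + 1) : ℂ) := by
      intro k _
      have harg : Complex.I * (((2 * n - 1 : ℕ) : ℂ) - 1) *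
          (((2 * ((k : ℝ) + 1) + 1) * π / (2 * (n : ℝ) - 2) : ℝ) : ℂ)
          = ((2 * k + 3 : ℕ) : ℂ) * ((π : ℂ) * Complex.I) := by
        rw [Nat.cast_sub (by omega : 1 ≤ 2 * n)]
        push_cast
        have hn1 : (n : ℂ) - 1 ≠ 0 := fun h => hn' (by linear_combination 2 * h)
        field_simp
        ring
      rw [harg, Complex.exp_nat_mul, Complex.exp_pi_mul_I,
        Odd.neg_one_pow ⟨k + 1, by ring⟩]
      ring
    rw [Finset.sum_congr rfl hterm, Finset.sum_neg_distrib]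
    have hsum : ∑ k ∈ Finset.range (2 * n - 2), m (k + 1) = 1 := by
      rw [h22, sum_range_two_mul_pair (n - 1) (fun k => m (k + 1)),
        Finset.sum_add_distrib]
      have : ∑ j ∈ Finset.range (n - 1), m (2 * j + 1 + 1)
          = ∑ j ∈ Finset.range (n - 1), m (2 * (j + 1)) := by
        apply Finset.sum_congr rfl
        intro j _
        rfl
      rw [this, heven, hodd]
      norm_num
    have : ∑ k ∈ Finset.range (2 * n - 2), (m (k + 1) : ℂ)
        = ((∑ k ∈ Finset.range (2 * n - 2), m (k + 1) : ℝ) : ℂ) := by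
      push_cast; rfl
    rw [this, hsum]
    norm_num
  -- a n = 0
  have hA0 : a n = 0 := by
    rw [ha]
    have hterm : ∀ k ∈ Finset.range (2 * n - 2),
        (m (k + 1) : ℂ) * Complex.exp (Complex.I * ((n : ℂ) - 1) *
          (((2 * ((k : ℝ) + 1) + 1) * π / (2 * (n : ℝ) - 2) : ℝ) : ℂ))
        = (((-1 : ℝ) ^ (k + 1) * m (k + 1) : ℝ) : ℂ) * Complex.I := by
      intro k _
      have harg : Complex.I * ((n : ℂ) - 1) *
          (((2 * ((k : ℝ) + 1) + 1) * π / (2 * (n : ℝ) - 2) : ℝ) : ℂ)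
          = ((2 * k + 3 : ℕ) : ℂ) * (((π / 2 : ℝ) : ℂ) * Complex.I) := by
        push_cast
        have hn1 : (n : ℂ) - 1 ≠ 0 := fun h => hn' (by linear_combination 2 * h)
        field_simp
        ring
      have hI : Complex.exp (((π / 2 : ℝ) : ℂ) * Complex.I) = Complex.I := by
        rw [Complex.exp_mul_I, ← Complex.ofReal_cos, ← Complex.ofReal_sin,
          Real.cos_pi_div_two, Real.sin_pi_div_two]
        simp
      have hpow : Complex.I ^ (2 * k + 3) = (-1 : ℂ) ^ (k + 1) * Complex.I := by
        rw [show 2 * k + 3 = 2 * (k + 1) + 1 by ring, pow_succ, pow_mul,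
          Complex.I_sq]
      rw [harg, Complex.exp_nat_mul, hI, hpow]
      push_cast
      ring
    rw [Finset.sum_congr rfl hterm, ← Finset.sum_mul]
    have : ∑ k ∈ Finset.range (2 * n - 2), (((-1 : ℝ) ^ (k + 1) * m (k + 1) : ℝ) : ℂ)
        = ((∑ k ∈ Finset.range (2 * n - 2), (-1 : ℝ) ^ (k + 1) * m (k + 1) : ℝ) : ℂ) := by
      push_cast; rfl
    rw [this]
    have hsum : ∑ k ∈ Finset.range (2 * n - 2), (-1 : ℝ) ^ (k + 1) * m (k + 1) = 0 := by
      rw [h22, sum_range_two_mul_pair (n - 1)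
        (fun k => (-1 : ℝ) ^ (k + 1) * m (k + 1))]
      have : ∀ j ∈ Finset.range (n - 1),
          ((-1 : ℝ) ^ (2 * j + 1) * m (2 * j + 1) + (-1 : ℝ) ^ (2 * j + 1 + 1) * m (2 * j + 1 + 1))
          = -(m (2 * j + 1)) + m (2 * (j + 1)) := by
        intro j _
        have h1 : ((-1 : ℝ)) ^ (2 * j + 1) = -1 := Odd.neg_one_pow ⟨j, by ring⟩
        have h2 : ((-1 : ℝ)) ^ (2 * j + 1 + 1) = 1 := Even.neg_one_pow ⟨j + 1, by ring⟩
        have h3 : 2 * j + 1 + 1 = 2 * (j + 1) := by omega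
        rw [h1, h2, h3]
        ring
      rw [Finset.sum_congr rfl this, Finset.sum_add_distrib,
        Finset.sum_neg_distrib, hodd, heven]
      norm_num
    rw [hsum]
    simp
  rw [hA, hA0]
  simp
end

section
/- Let n ≥ 2 and let α be a complex number with |α| = 1. The function f(z) = z + (α/(2n−1)) z^{2n−1} satisfies Σ_{k≥2} k|a_k| ≤ 1, and for every λ with 0 < λ ≤ n²/(2n−1), |λ·a_n² − a_{2n−1}| = 1/(2n−1) = max(λ/n², 1/(2n−1)). -/
theorem zalcman_stmt_17 (n : ℕ) (hn : 2 ≤ n) (α : ℂ) (hα : ‖α‖ = 1)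
    (a : ℕ → ℂ) (ha : ∀ k : ℕ, a k = if k = 2 * n - 1 then α / (2 * (n : ℂ) - 1) else 0) :
    (∑' k : ℕ, ((k + 2 : ℕ) : ℝ) * ‖a (k + 2)‖) ≤ 1 ∧
      ∀ lam : ℝ, 0 < lam → lam ≤ (n : ℝ) ^ 2 / (2 * n - 1) →
        ‖(lam : ℂ) * (a n) ^ 2 - a (2 * n - 1)‖ = 1 / (2 * (n : ℝ) - 1) ∧
          (1 / (2 * (n : ℝ) - 1) = max (lam / (n : ℝ) ^ 2) (1 / (2 * (n : ℝ) - 1))) := by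
  have hnR : (2:ℝ) ≤ (n:ℝ) := by exact_mod_cast hn
  have hpos : (0:ℝ) < 2*(n:ℝ) - 1 := by linarith
  have hcast : ((2*n-1 : ℕ):ℝ) = 2*(n:ℝ)-1 := by
    rw [Nat.cast_sub (by omega : 1 ≤ 2*n)]; push_cast; ring
  have hnorm : ‖a (2*n-1)‖ = 1/(2*(n:ℝ)-1) := by
    rw [ha, if_pos rfl, norm_div, hα]
    have h2 : (2*(n:ℂ)-1) = ((2*(n:ℝ)-1 : ℝ) : ℂ) := by push_cast; ring
    rw [h2, Complex.norm_real, Real.norm_of_nonneg hpos.le]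
  have han : a n = 0 := by rw [ha, if_neg (by omega)]
  constructor
  · have hts : (∑' k : ℕ, ((k + 2 : ℕ) : ℝ) * ‖a (k + 2)‖)
        = ((2*n-3+2 : ℕ) : ℝ) * ‖a (2*n-3+2)‖ := by
      apply tsum_eq_single
      intro k hk
      rw [ha, if_neg (by omega), norm_zero, mul_zero]
    rw [hts]
    have h3 : 2*n-3+2 = 2*n-1 := by omega
    rw [h3, hnorm, hcast]
    rw [mul_one_div, div_self (ne_of_gt hpos)]
  · intro lam hlam hlam2
    have hn2 : (0:ℝ) < (n:ℝ)^2 := by positivity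
    have hle : lam / (n:ℝ)^2 ≤ 1/(2*(n:ℝ)-1) := by
      rw [div_le_div_iff₀ hn2 hpos]
      calc lam * (2*(n:ℝ)-1) ≤ ((n:ℝ)^2/(2*(n:ℝ)-1)) * (2*(n:ℝ)-1) := by
            apply mul_le_mul_of_nonneg_right _ hpos.le
            convert hlam2 using 2
          _ = 1 * (n:ℝ)^2 := by rw [div_mul_cancel₀ _ (ne_of_gt hpos), one_mul]
    constructor
    · rw [han]
      simp only [zero_pow, mul_zero, zero_sub, norm_neg, ne_eq, OfNat.ofNat_ne_zero,
        not_false_eq_true]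
      exact hnorm
    · exact (max_eq_right hle).symm
end

section
/- Let n ≥ 2 and let α be a complex number with |α| = 1. The function f(z) = z + (α/n) z^n satisfies Σ_{k≥2} k|a_k| ≤ 1, and for every λ ≥ n²/(2n−1), |λ·a_n² − a_{2n−1}| = λ/n² = max(λ/n², 1/(2n−1)). -/
theorem zalcman_stmt_18 (n : ℕ) (hn : 2 ≤ n) (α : ℂ) (hα : ‖α‖ = 1)
    (a : ℕ → ℂ) (ha : ∀ k : ℕ, a k = if k = n then α / (n : ℂ) else 0) :
    (∑' k : ℕ, ((k + 2 : ℕ) : ℝ) * ‖a (k + 2)‖) ≤ 1 ∧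
      ∀ lam : ℝ, (n : ℝ) ^ 2 / (2 * n - 1) ≤ lam →
        ‖(lam : ℂ) * (a n) ^ 2 - a (2 * n - 1)‖ = lam / (n : ℝ) ^ 2 ∧
          (lam / (n : ℝ) ^ 2 = max (lam / (n : ℝ) ^ 2) (1 / (2 * (n : ℝ) - 1))) := by
  have hn0 : (0:ℝ) < n := by positivity
  have hnC : (n:ℂ) ≠ 0 := by exact_mod_cast (by omega : n ≠ 0)
  have hnorm : ‖α / (n:ℂ)‖ = 1 / n := by
    rw [norm_div, hα, Complex.norm_natCast]
  have h2n1 : (0:ℝ) < 2 * (n:ℝ) - 1 := by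
    have : (2:ℝ) ≤ n := by exact_mod_cast hn
    linarith
  constructor
  · have := tsum_eq_single (L := SummationFilter.unconditional ℕ) (f := fun k : ℕ => ((k + 2 : ℕ) : ℝ) * ‖a (k + 2)‖) (n - 2) ?_
    · rw [this]
      have h : n - 2 + 2 = n := by omega
      rw [h, ha n, if_pos rfl, hnorm]
      rw [mul_one_div, div_self (ne_of_gt hn0)]
    · intro b hb
      have hbn : b + 2 ≠ n := by omega
      simp [ha, hbn]
  · intro lam hlam
    have hlam0 : 0 < lam := lt_of_lt_of_le (by positivity) hlam
    have h1 : a n = α / n := by rw [ha]; simp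
    have h2 : a (2 * n - 1) = 0 := by
      rw [ha]; rw [if_neg (by omega)]
    constructor
    · rw [h1, h2, sub_zero, norm_mul, norm_pow, hnorm, Complex.norm_real,
        Real.norm_of_nonneg hlam0.le]
      field_simp
    · rw [max_eq_left]
      rw [div_le_div_iff₀ h2n1 (by positivity)]
      calc (1:ℝ) * (n:ℝ)^2 = (n:ℝ)^2 := one_mul _
        _ ≤ lam * (2 * n - 1) := by
            rw [div_le_iff₀ h2n1] at hlam; linarith
end
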